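/- Every positive integer appears in the Yellowstone sequence: for every k ≥ 1 there exists n with a(n) = k. -/

import Mathlib

/-- The Yellowstone sequence: a 1 = 1, a 2 = 2, a 3 = 3, and for n ≥ 4,
`a n` is the least positive integer not among `a 1, …, a (n-1)` which shares
a common factor with `a (n-2)` and is coprime to `a (n-1)`. -/
def IsYellowstone (a : ℕ → ℕ) : Prop :=
  a 1 = 1 ∧ a 2 = 2 ∧ a 3 = 3 ∧
  ∀ n, 4 ≤ n →
    IsLeast {k : ℕ | 0 < k ∧ (∀ m, 1 ≤ m → m < n → a m ≠ k) ∧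
      1 < Nat.gcd k (a (n - 2)) ∧ Nat.gcd k (a (n - 1)) = 1} (a n)

namespace YSAux

/-- Max of the values `a m` for `1 ≤ m < N`. -/
def valB (a : ℕ → ℕ) (N : ℕ) : ℕ := (Finset.Ico 1 N).sup a

lemma val_le (a : ℕ → ℕ) (N m : ℕ) (h1 : 1 ≤ m) (h2 : m < N) : a m ≤ valB a N :=
  Finset.le_sup (Finset.mem_Ico.mpr ⟨h1, h2⟩)

lemma lt_pow {p M : ℕ} (hp : 2 ≤ p) : M < p ^ (M + 1) := by
  have h1 : M < 2 ^ M := Nat.lt_two_pow_self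
  have h2 : (2:ℕ) ^ M ≤ 2 ^ (M + 1) := Nat.pow_le_pow_right (by norm_num) (by omega)
  have h3 : (2:ℕ) ^ (M + 1) ≤ p ^ (M + 1) := Nat.pow_le_pow_left hp _
  omega

lemma ppow_gcd {p e x : ℕ} (hp : p.Prime) (h : 1 < Nat.gcd (p ^ e) x) : p ∣ x := by
  have hd : Nat.gcd (p ^ e) x ∣ p ^ e := Nat.gcd_dvd_left _ _
  obtain ⟨i, hie, hi⟩ := (Nat.dvd_prime_pow hp).mp hd
  have hi1 : i ≠ 0 := by
    rintro rfl
    rw [pow_zero] at hi; omega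
  exact (dvd_pow_self p hi1).trans (hi ▸ Nat.gcd_dvd_right (p ^ e) x)

variable {a : ℕ → ℕ}

lemma mem4 (ha : IsYellowstone a) {n : ℕ} (hn : 4 ≤ n) :
    0 < a n ∧ (∀ m, 1 ≤ m → m < n → a m ≠ a n) ∧
      1 < Nat.gcd (a n) (a (n - 2)) ∧ Nat.gcd (a n) (a (n - 1)) = 1 :=
  (ha.2.2.2 n hn).1

lemma le4 (ha : IsYellowstone a) {n : ℕ} (hn : 4 ≤ n) {c : ℕ}
    (h0 : 0 < c) (h1 : ∀ m, 1 ≤ m → m < n → a m ≠ c)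
    (h2 : 1 < Nat.gcd c (a (n - 2))) (h3 : Nat.gcd c (a (n - 1)) = 1) :
    a n ≤ c :=
  (ha.2.2.2 n hn).2 ⟨h0, h1, h2, h3⟩

lemma pos (ha : IsYellowstone a) : ∀ n, 1 ≤ n → 0 < a n := by
  intro n hn
  rcases le_or_gt 4 n with h | h
  · exact (mem4 ha h).1
  · interval_cases n <;> simp [ha.1, ha.2.1, ha.2.2.1]

lemma gt_one (ha : IsYellowstone a) : ∀ n, 2 ≤ n → 1 < a n := by
  intro n hn
  rcases le_or_gt 4 n with h | h
  · have h0 := (mem4 ha h).1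
    have h1 := (mem4 ha h).2.1 1 le_rfl (by omega)
    rw [ha.1] at h1
    omega
  · interval_cases n <;> simp [ha.2.1, ha.2.2.1]

lemma inj (ha : IsYellowstone a) : ∀ m n, 1 ≤ m → m < n → a m ≠ a n := by
  intro m n h1 h2
  rcases le_or_gt 4 n with h | h
  · exact (mem4 ha h).2.1 m h1 h2
  · interval_cases n <;> interval_cases m <;> simp [ha.1, ha.2.1, ha.2.2.1]

lemma consec (ha : IsYellowstone a) : ∀ n, 2 ≤ n → Nat.gcd (a (n + 1)) (a n) = 1 := by
  intro n hn
  rcases le_or_gt 3 n with h | h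
  · have h2 := (mem4 ha (show 4 ≤ n + 1 by omega)).2.2.2
    rwa [Nat.add_sub_cancel] at h2
  · have hn2 : n = 2 := by omega
    subst hn2
    rw [show (2:ℕ) + 1 = 3 from rfl, ha.2.2.1, ha.2.1]
    decide

lemma gcd_step (ha : IsYellowstone a) {n : ℕ} (hn : 2 ≤ n) :
    1 < Nat.gcd (a (n + 2)) (a n) := by
  have h2 := (mem4 ha (show 4 ≤ n + 2 by omega)).2.2.1
  rwa [show n + 2 - 2 = n by omega] at h2

lemma cand_le (ha : IsYellowstone a) {n c : ℕ} (hn : 2 ≤ n) (hc0 : 0 < c)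
    (hnew : ∀ m, 1 ≤ m → a m ≠ c)
    (hg : 1 < Nat.gcd c (a n)) (hcop : Nat.gcd c (a (n + 1)) = 1) :
    a (n + 2) ≤ c := by
  apply le4 ha (show 4 ≤ n + 2 by omega) hc0 (fun m hm _ => hnew m hm)
  · rwa [show n + 2 - 2 = n by omega]
  · rwa [show n + 2 - 1 = n + 1 by omega]

lemma escape (ha : IsYellowstone a) (B : ℕ) : ∃ N, 1 ≤ N ∧ ∀ n, N ≤ n → B < a n := by
  have hfin : {n : ℕ | 1 ≤ n ∧ a n ≤ B}.Finite := by
    apply Set.Finite.of_finite_image (f := a)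
    · apply Set.Finite.subset (Set.finite_Icc 1 B)
      rintro _ ⟨n, ⟨h1, h2⟩, rfl⟩
      exact ⟨pos ha n h1, h2⟩
    · intro x hx y hy hxy
      by_contra hne
      rcases Nat.lt_or_ge x y with h | h
      · exact (inj ha x y hx.1 h) hxy
      · exact (inj ha y x hy.1 (by omega)) hxy.symm
  obtain ⟨ub, hub⟩ := hfin.bddAbove
  refine ⟨ub + 1, by omega, fun n hn => ?_⟩
  by_contra hc
  push_neg at hc
  have hmem : n ∈ {n : ℕ | 1 ≤ n ∧ a n ≤ B} := ⟨by omega, hc⟩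
  have := hub hmem
  omega

lemma occ_ge {v N : ℕ} (hv : valB a N < v) (hocc : ∃ i, 1 ≤ i ∧ a i = v) :
    ∃ i, N ≤ i ∧ a i = v := by
  obtain ⟨i, hi1, hie⟩ := hocc
  refine ⟨i, ?_, hie⟩
  by_contra hlt
  push_neg at hlt
  have := val_le a N i hi1 hlt
  omega

/-- The key dichotomy for a missing value `w`. -/
lemma dich (ha : IsYellowstone a) {w : ℕ} (hw0 : 0 < w)
    (hw : ∀ n, 1 ≤ n → a n ≠ w) :
    (∃ N, ∀ n, N ≤ n → Nat.gcd w (a n) = 1) ∨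
    (∃ N, 2 ≤ N ∧ ∀ n, N ≤ n → 1 < Nat.gcd w (a n)) := by
  obtain ⟨N₀, hN₀1, hN₀⟩ := escape ha w
  have key : ∀ n, max N₀ 2 ≤ n → 1 < Nat.gcd w (a n) → 1 < Nat.gcd w (a (n + 1)) := by
    intro n hn h1
    by_contra hc
    have hg1 : Nat.gcd w (a (n + 1)) = 1 := by
      have := Nat.gcd_pos_of_pos_left (a (n + 1)) hw0
      omega
    have hn2 : 2 ≤ n := le_trans (le_max_right _ _) hn
    have hle : a (n + 2) ≤ w := cand_le ha hn2 hw0 (fun m hm => hw m hm) h1 hg1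
    have hbig := hN₀ (n + 2) (le_trans (le_trans (le_max_left _ _) hn) (by omega))
    omega
  by_cases hex : ∃ n, max N₀ 2 ≤ n ∧ 1 < Nat.gcd w (a n)
  · obtain ⟨n₀, hn₀N, hn₀⟩ := hex
    right
    refine ⟨n₀, le_trans (le_max_right _ _) hn₀N, ?_⟩
    intro n hn
    induction n, hn using Nat.le_induction with
    | base => exact hn₀
    | succ n hn ih => exact key n (le_trans hn₀N hn) ih
  · left
    refine ⟨max N₀ 2, fun n hn => ?_⟩
    have h1 : ¬ 1 < Nat.gcd w (a n) := fun h => hex ⟨n, hn, h⟩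
    have := Nat.gcd_pos_of_pos_left (a n) hw0
    omega

lemma prime_dead (ha : IsYellowstone a) {p e : ℕ} (hp : p.Prime) (he : 1 ≤ e)
    (hm : ∀ n, 1 ≤ n → a n ≠ p ^ e) :
    ∃ N, ∀ n, N ≤ n → ¬ p ∣ a n := by
  rcases dich ha (pow_pos hp.pos e) hm with ⟨N, hN⟩ | ⟨N, hN2, hN⟩
  · refine ⟨N, fun n hn hd => ?_⟩
    have h1 := hN n hn
    have h2 : p ∣ Nat.gcd (p ^ e) (a n) := Nat.dvd_gcd (dvd_pow_self p (by omega)) hd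
    rw [h1] at h2
    exact hp.ne_one (Nat.dvd_one.mp h2)
  · exfalso
    have h1 : p ∣ a N := ppow_gcd hp (hN N le_rfl)
    have h2 : p ∣ a (N + 1) := ppow_gcd hp (hN (N + 1) (by omega))
    have h3 := consec ha N hN2
    have h4 : p ∣ Nat.gcd (a (N + 1)) (a N) := Nat.dvd_gcd h2 h1
    rw [h3] at h4
    exact hp.ne_one (Nat.dvd_one.mp h4)

lemma alive_powers (ha : IsYellowstone a) {p : ℕ} (hp : p.Prime)
    (hal : ∀ N, ∃ n, N ≤ n ∧ p ∣ a n) :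
    ∀ e, 1 ≤ e → ∃ i, 1 ≤ i ∧ a i = p ^ e := by
  intro e he
  by_contra hc
  push_neg at hc
  obtain ⟨N, hN⟩ := prime_dead ha hp he hc
  obtain ⟨n, hn, hd⟩ := hal N
  exact hN n hn hd

lemma exists_alive (ha : IsYellowstone a) :
    ∃ p, p.Prime ∧ ∀ N, ∃ n, N ≤ n ∧ p ∣ a n := by
  by_contra hall
  push_neg at hall
  choose f hf using hall
  set N₂ := max (f 2 Nat.prime_two) 2 with hN₂def
  have hN₂2 : 2 ≤ N₂ := le_max_right _ _
  have hN₂f : f 2 Nat.prime_two ≤ N₂ := le_max_left _ _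
  set B₂ := valB a N₂ with hB₂def
  have heven : ∀ m, 1 ≤ m → 2 ∣ a m → a m ≤ B₂ := by
    intro m hm hdm
    have hmN : m < N₂ := by
      by_contra hc
      push_neg at hc
      exact hf 2 Nat.prime_two m (le_trans hN₂f hc) hdm
    exact val_le a N₂ m hm hmN
  have stepA : ∀ m r, N₂ ≤ m → r.Prime → r ∣ a m → B₂ < r → a (m + 2) ≤ 2 * r := by
    intro m r hm hr hrd hBr
    have hm2 : 2 ≤ m := le_trans hN₂2 hm
    apply cand_le ha hm2 (by have := hr.pos; omega)
    · intro m' hm' he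
      have h2d : 2 ∣ a m' := by rw [he]; exact ⟨r, rfl⟩
      have := heven m' hm' h2d
      have := hr.two_le
      omega
    · have hdvd : r ∣ Nat.gcd (2 * r) (a m) := Nat.dvd_gcd (dvd_mul_left r 2) hrd
      have hpos : 0 < Nat.gcd (2 * r) (a m) :=
        Nat.gcd_pos_of_pos_left _ (by have := hr.pos; omega)
      have := Nat.le_of_dvd hpos hdvd
      have := hr.two_le
      omega
    · have h2c : Nat.Coprime 2 (a (m + 1)) :=
        (Nat.Prime.coprime_iff_not_dvd Nat.prime_two).mpr
          (hf 2 Nat.prime_two (m + 1) (by omega))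
      have hrc : Nat.Coprime r (a (m + 1)) := by
        rw [hr.coprime_iff_not_dvd]
        intro hrd1
        have h3 := consec ha m hm2
        have h4 : r ∣ Nat.gcd (a (m + 1)) (a m) := Nat.dvd_gcd hrd1 hrd
        rw [h3] at h4
        exact hr.ne_one (Nat.dvd_one.mp h4)
      exact Nat.Coprime.mul h2c hrc
  have stepB : ∀ m r, N₂ ≤ m → r.Prime → r ∣ a m → B₂ < r →
      (∀ s, s.Prime → s ∣ a m → r ≤ s) →
      ∃ s, s.Prime ∧ a (m + 2) = s ∧ B₂ < s := by
    intro m r hm hr hrd hBr hmin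
    have hm2 : 2 ≤ m := le_trans hN₂2 hm
    have hle2r := stepA m r hm hr hrd hBr
    have hg := gcd_step ha hm2
    have hgne1 : Nat.gcd (a (m + 2)) (a m) ≠ 1 := by omega
    set s := (Nat.gcd (a (m + 2)) (a m)).minFac with hsdef
    have hs : s.Prime := Nat.minFac_prime hgne1
    have hsd2 : s ∣ a (m + 2) :=
      (Nat.minFac_dvd _).trans (Nat.gcd_dvd_left _ _)
    have hsdm : s ∣ a m :=
      (Nat.minFac_dvd _).trans (Nat.gcd_dvd_right _ _)
    have hrs : r ≤ s := hmin s hs hsdm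
    obtain ⟨t, ht⟩ := hsd2
    have hpos : 0 < a (m + 2) := pos ha (m + 2) (by omega)
    have hges : s ≤ a (m + 2) := Nat.le_of_dvd hpos (ht ▸ Dvd.intro t rfl)
    have hodd : ¬ 2 ∣ a (m + 2) := by
      intro hd
      have := heven (m + 2) (by omega) hd
      omega
    have hst : s * t ≤ 2 * r := by rw [← ht]; exact hle2r
    have hst2 : s * t ≤ s * 2 := by omega
    have ht2 : t ≤ 2 := Nat.le_of_mul_le_mul_left hst2 hs.pos
    have htpos : 0 < t := by
      rcases Nat.eq_zero_or_pos t with h0 | h0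
      · rw [h0, mul_zero] at ht; omega
      · exact h0
    interval_cases t
    · exact ⟨s, hs, by rw [ht, mul_one], by omega⟩
    · exfalso
      exact hodd ⟨s, by omega⟩
  by_cases hbig : ∃ n, N₂ ≤ n ∧ B₂ < (a n).minFac
  · obtain ⟨n, hn, hPB⟩ := hbig
    have han1 : a n ≠ 1 := by
      have := gt_one ha n (le_trans hN₂2 hn)
      omega
    have hP : (a n).minFac.Prime := Nat.minFac_prime han1
    have hPd : (a n).minFac ∣ a n := Nat.minFac_dvd _
    have hmin1 : ∀ s, s.Prime → s ∣ a n → (a n).minFac ≤ s := fun s hs hsd =>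
      Nat.minFac_le_of_dvd hs.two_le hsd
    obtain ⟨s, hs, hs2, hBs⟩ := stepB n _ hn hP hPd hPB hmin1
    have hsd : s ∣ a (n + 2) := by rw [hs2]
    have hmin2 : ∀ u, u.Prime → u ∣ a (n + 2) → s ≤ u := by
      intro u hu hud
      rw [hs2] at hud
      exact ((Nat.prime_dvd_prime_iff_eq hu hs).mp hud).ge
    obtain ⟨u, hu, hu2, hBu⟩ := stepB (n + 2) s (by omega) hs hsd hBs hmin2
    have hg := gcd_step ha (show 2 ≤ n + 2 by omega)
    rw [hu2, hs2] at hg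
    have hgu : Nat.gcd u s ∣ u := Nat.gcd_dvd_left _ _
    have hus : u = s := by
      rcases (Nat.Prime.eq_one_or_self_of_dvd hu _ hgu) with h1 | h1
      · omega
      · exact (Nat.prime_dvd_prime_iff_eq hu hs).mp (h1 ▸ Nat.gcd_dvd_right u s)
    have hne := inj ha (n + 2) (n + 2 + 2) (by omega) (by omega)
    rw [hs2, hu2, hus] at hne
    exact hne rfl
  · push_neg at hbig
    set N₃ := (Finset.range (B₂ + 1)).sup (fun q => if h : q.Prime then f q h else 0)
      with hN₃def
    set n := max N₂ N₃ with hndef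
    have hnN₂ : N₂ ≤ n := le_max_left _ _
    have h1 : (a n).minFac ≤ B₂ := hbig n hnN₂
    have han1 : a n ≠ 1 := by
      have := gt_one ha n (le_trans hN₂2 hnN₂)
      omega
    have hq : (a n).minFac.Prime := Nat.minFac_prime han1
    have hqd : (a n).minFac ∣ a n := Nat.minFac_dvd _
    have hfq : f (a n).minFac hq ≤ N₃ := by
      have hmem : (a n).minFac ∈ Finset.range (B₂ + 1) := Finset.mem_range.mpr (by omega)
      have hls := Finset.le_sup (f := fun q => if h : q.Prime then f q h else 0) hmem
      have hls' : (if h : Nat.Prime (a n).minFac then f (a n).minFac h else 0) ≤ N₃ := hls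
      rw [dif_pos hq] at hls'
      exact hls'
    exact hf (a n).minFac hq n (le_trans hfq (le_max_right _ _)) hqd

lemma all_alive (ha : IsYellowstone a) :
    ∀ q, q.Prime → ∀ N, ∃ n, N ≤ n ∧ q ∣ a n := by
  intro q hq
  by_contra hc
  push_neg at hc
  obtain ⟨Nq, hNq⟩ := hc
  obtain ⟨p, hp, hal⟩ := exists_alive ha
  set Bq := valB a Nq with hBqdef
  have hqval : ∀ m, 1 ≤ m → q ∣ a m → a m ≤ Bq := by
    intro m hm hdm
    have hmN : m < Nq := by
      by_contra hcc
      push_neg at hcc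
      exact hNq m hcc hdm
    exact val_le a Nq m hm hmN
  set c := q * p ^ (Bq + 1) with hcdef
  have hcBq : Bq < c := by
    have h1 : Bq < p ^ (Bq + 1) := lt_pow hp.two_le
    have h3 : p ^ (Bq + 1) ≤ q * p ^ (Bq + 1) :=
      Nat.le_mul_of_pos_left _ hq.pos
    omega
  have hcnew : ∀ m, 1 ≤ m → a m ≠ c := by
    intro m hm he
    have hqm : q ∣ a m := by rw [he, hcdef]; exact Dvd.intro _ rfl
    have := hqval m hm hqm
    omega
  set N' := max Nq 2 + 2 with hN'def
  set M := max c (valB a N') with hMdef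
  have hpe : M < p ^ (M + 1) := lt_pow hp.two_le
  obtain ⟨i₀, hi₀1, hi₀e⟩ := alive_powers ha hp hal (M + 1) (by omega)
  obtain ⟨i, hiN', hie⟩ := occ_ge (a := a) (N := N')
    (by have : valB a N' ≤ M := le_max_right _ _; omega) ⟨i₀, hi₀1, hi₀e⟩
  have hi4 : 4 ≤ i := by omega
  have hpd2 : p ∣ a (i - 2) := by
    have hm := (mem4 ha hi4).2.2.1
    rw [hie] at hm
    exact ppow_gcd hp hm
  have hpn1 : ¬ p ∣ a (i - 1) := by
    intro hd
    have h3 := consec ha (i - 2) (by omega)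
    rw [show i - 2 + 1 = i - 1 by omega] at h3
    have h4 : p ∣ Nat.gcd (a (i - 1)) (a (i - 2)) := Nat.dvd_gcd hd hpd2
    rw [h3] at h4
    exact hp.ne_one (Nat.dvd_one.mp h4)
  have hqn1 : ¬ q ∣ a (i - 1) := hNq (i - 1) (by omega)
  have hpc : p ∣ c := by
    rw [hcdef]
    exact (dvd_pow_self p (Nat.succ_ne_zero Bq)).mul_left q
  have hle : a i ≤ c := by
    apply le4 ha hi4 (by rw [hcdef]; exact Nat.mul_pos hq.pos (pow_pos hp.pos _)) (fun m hm _ => hcnew m hm)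
    · have hdvd : p ∣ Nat.gcd c (a (i - 2)) := Nat.dvd_gcd hpc hpd2
      have hpos : 0 < Nat.gcd c (a (i - 2)) :=
        Nat.gcd_pos_of_pos_left _ (by rw [hcdef]; exact Nat.mul_pos hq.pos (pow_pos hp.pos _))
      have := Nat.le_of_dvd hpos hdvd
      have := hp.two_le
      omega
    · rw [hcdef]
      exact Nat.Coprime.mul (hq.coprime_iff_not_dvd.mpr hqn1)
        (Nat.Coprime.pow_left _ (hp.coprime_iff_not_dvd.mpr hpn1))
  rw [hie] at hle
  have hcM : c ≤ M := le_max_left _ _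
  omega

end YSAux

theorem yellowstone_surjective (a : ℕ → ℕ) (ha : IsYellowstone a) :
    ∀ k, 1 ≤ k → ∃ n, 1 ≤ n ∧ a n = k := by
  intro k hk
  by_contra hc
  push_neg at hc
  have hc' : ∀ n, 1 ≤ n → a n ≠ k := fun n hn => hc n hn
  have hk2 : 2 ≤ k := by
    rcases Nat.lt_or_ge k 2 with h | h
    · interval_cases k
      exact absurd ha.1 (hc' 1 le_rfl)
    · exact h
  rcases YSAux.dich ha (by omega) hc' with ⟨N, hN⟩ | ⟨N, hN2, hN⟩
  · have hp : k.minFac.Prime := Nat.minFac_prime (by omega)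
    obtain ⟨n, hn, hpd⟩ := YSAux.all_alive ha k.minFac hp N
    have h1 := hN n hn
    have h2 : k.minFac ∣ Nat.gcd k (a n) := Nat.dvd_gcd (Nat.minFac_dvd k) hpd
    rw [h1] at h2
    exact hp.ne_one (Nat.dvd_one.mp h2)
  · obtain ⟨q, hqk, hq⟩ := Nat.exists_infinite_primes (k + 1)
    have hal := YSAux.all_alive ha q hq
    set M := YSAux.valB a N with hMdef
    have hpe : M < q ^ (M + 1) := YSAux.lt_pow hq.two_le
    obtain ⟨i₀, hi₀1, hi₀e⟩ := YSAux.alive_powers ha hq hal (M + 1) (by omega)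
    obtain ⟨i, hiN, hie⟩ := YSAux.occ_ge (a := a) (N := N) (by omega) ⟨i₀, hi₀1, hi₀e⟩
    have h1 := hN i hiN
    rw [hie] at h1
    have hqdk : q ∣ k := by
      rw [Nat.gcd_comm] at h1
      exact YSAux.ppow_gcd hq h1
    have := Nat.le_of_dvd (by omega) hqdk
    omega
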